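/- arXiv:2408.06096 — 10 statements merged into one kernel-verified Lean document; each statement's English description precedes it below -/
import Mathlib

section
/- Let G be a Hausdorff topological group and 𝔏ₙ, ℌₙ : G → G (n ≥ 1) maps with 𝔏ₙ ∘ ℌₙ = id_G for all n. Suppose μ : G × G → G is a synchronized transported multiplication, i.e. for all a, b ∈ G and all sequences (aₙ), (bₙ) in G with aₙ → a and bₙ → b, the sequence ℌₙ(𝔏ₙ(aₙ) · 𝔏ₙ(bₙ)) converges to μ(a, b). Then μ is associative: μ(μ(a, b), c) = μ(a, μ(b, c)) for all a, b, c ∈ G. -/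
/-- In a Hausdorff topological group `G` with maps `𝔏ₙ, ℌₙ : G → G`
satisfying `𝔏ₙ ∘ ℌₙ = id`, any synchronized transported multiplication `μ` is
associative. -/
theorem transported_mul_assoc {G : Type*} [Group G] [TopologicalSpace G]
    [IsTopologicalGroup G] [T2Space G]
    (𝔏 ℌ : ℕ → G → G) (h𝔏ℌ : ∀ n, n ≥ 1 → ∀ g : G, 𝔏 n (ℌ n g) = g)
    (μ : G → G → G)
    (hsync : ∀ (a b : G) (aseq bseq : ℕ → G),
      Filter.Tendsto aseq Filter.atTop (nhds a) →
      Filter.Tendsto bseq Filter.atTop (nhds b) →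
      Filter.Tendsto (fun n => ℌ n (𝔏 n (aseq n) * 𝔏 n (bseq n)))
        Filter.atTop (nhds (μ a b))) :
    ∀ a b c : G, μ (μ a b) c = μ a (μ b c) := by
  intro a b c
  set x : ℕ → G := fun n => ℌ n (𝔏 n a * 𝔏 n b) with hxdef
  set y : ℕ → G := fun n => ℌ n (𝔏 n b * 𝔏 n c) with hydef
  have hx : Filter.Tendsto x Filter.atTop (nhds (μ a b)) :=
    hsync a b _ _ tendsto_const_nhds tendsto_const_nhds
  have hy : Filter.Tendsto y Filter.atTop (nhds (μ b c)) :=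
    hsync b c _ _ tendsto_const_nhds tendsto_const_nhds
  have h1 : Filter.Tendsto (fun n => ℌ n (𝔏 n (x n) * 𝔏 n c))
      Filter.atTop (nhds (μ (μ a b) c)) :=
    hsync _ c x _ hx tendsto_const_nhds
  have h2 : Filter.Tendsto (fun n => ℌ n (𝔏 n a * 𝔏 n (y n)))
      Filter.atTop (nhds (μ a (μ b c))) :=
    hsync a _ _ y tendsto_const_nhds hy
  have heq : ∀ᶠ n in Filter.atTop,
      (fun n => ℌ n (𝔏 n (x n) * 𝔏 n c)) n = (fun n => ℌ n (𝔏 n a * 𝔏 n (y n))) n := by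
    filter_upwards [Filter.eventually_ge_atTop 1] with n hn
    simp only [hxdef, hydef, h𝔏ℌ n hn, mul_assoc]
  exact tendsto_nhds_unique (h1.congr' heq) h2
end

section
/- Let G be a Hausdorff topological group and 𝔏ₙ, ℌₙ : G → G (n ≥ 1) bijective maps with ℌₙ = 𝔏ₙ⁻¹ for all n. Suppose μ : G × G → G is a synchronized transported multiplication, i.e. for all a, b ∈ G and all sequences (aₙ), (bₙ) in G with aₙ → a and bₙ → b, one has ℌₙ(𝔏ₙ(aₙ) · 𝔏ₙ(bₙ)) → μ(a, b). Assume further that the limits e∞ := limₙ ℌₙ(e) and, for each a ∈ G, ι(a) := limₙ ℌₙ(𝔏ₙ(a)⁻¹) exist. Then (G, μ) is a group; more precisely μ is associative, μ(a, e∞) = a for all a ∈ G, and μ(a, ι(a)) = e∞ for all a ∈ G, so e∞ is the identity of (G, μ) and ι(a) is the inverse of a in (G, μ). -/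
/-- With bijective pairs `(𝔏ₙ, ℌₙ)` (`ℌₙ = 𝔏ₙ⁻¹`), a synchronized
transported multiplication `μ` together with the limits `e∞ = limₙ ℌₙ(e)` and
`ι(a) = limₙ ℌₙ(𝔏ₙ(a)⁻¹)` makes `(G, μ)` a group: `μ` is associative, `e∞` is a
right identity and `ι(a)` is a right inverse of `a`. -/
theorem transported_group {G : Type*} [Group G] [TopologicalSpace G]
    [IsTopologicalGroup G] [T2Space G]
    (𝔏 ℌ : ℕ → G → G)
    (hbij : ∀ n, n ≥ 1 → Function.Bijective (𝔏 n))
    (h𝔏ℌ : ∀ n, n ≥ 1 → ∀ g : G, 𝔏 n (ℌ n g) = g)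
    (hℌ𝔏 : ∀ n, n ≥ 1 → ∀ g : G, ℌ n (𝔏 n g) = g)
    (μ : G → G → G)
    (hsync : ∀ (a b : G) (aseq bseq : ℕ → G),
      Filter.Tendsto aseq Filter.atTop (nhds a) →
      Filter.Tendsto bseq Filter.atTop (nhds b) →
      Filter.Tendsto (fun n => ℌ n (𝔏 n (aseq n) * 𝔏 n (bseq n)))
        Filter.atTop (nhds (μ a b)))
    (einf : G)
    (heinf : Filter.Tendsto (fun n => ℌ n (1 : G)) Filter.atTop (nhds einf))
    (ι : G → G)
    (hι : ∀ a : G,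
      Filter.Tendsto (fun n => ℌ n ((𝔏 n a)⁻¹)) Filter.atTop (nhds (ι a))) :
    (∀ a b c : G, μ (μ a b) c = μ a (μ b c)) ∧
    (∀ a : G, μ a einf = a) ∧
    (∀ a : G, μ a (ι a) = einf) := by

  have key : ∀ a b : G,
      Filter.Tendsto (fun n => ℌ n (𝔏 n a * 𝔏 n b)) Filter.atTop (nhds (μ a b)) :=
    fun a b => hsync a b (fun _ => a) (fun _ => b) tendsto_const_nhds tendsto_const_nhds
  refine ⟨?_, ?_, ?_⟩
  · intro a b c
    have h1 : Filter.Tendsto (fun n => ℌ n (𝔏 n a * 𝔏 n b * 𝔏 n c))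
        Filter.atTop (nhds (μ (μ a b) c)) := by
      have := hsync (μ a b) c (fun n => ℌ n (𝔏 n a * 𝔏 n b)) (fun _ => c)
        (key a b) tendsto_const_nhds
      refine this.congr' ?_
      filter_upwards [Filter.eventually_ge_atTop 1] with n hn
      rw [h𝔏ℌ n hn]
    have h2 : Filter.Tendsto (fun n => ℌ n (𝔏 n a * 𝔏 n b * 𝔏 n c))
        Filter.atTop (nhds (μ a (μ b c))) := by
      have := hsync a (μ b c) (fun _ => a) (fun n => ℌ n (𝔏 n b * 𝔏 n c))
        tendsto_const_nhds (key b c)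
      refine this.congr' ?_
      filter_upwards [Filter.eventually_ge_atTop 1] with n hn
      rw [h𝔏ℌ n hn, mul_assoc]
    exact tendsto_nhds_unique h1 h2
  · intro a
    have h1 : Filter.Tendsto (fun n => ℌ n (𝔏 n a * 𝔏 n (ℌ n 1)))
        Filter.atTop (nhds (μ a einf)) :=
      hsync a einf (fun _ => a) (fun n => ℌ n 1) tendsto_const_nhds heinf
    have h2 : Filter.Tendsto (fun n => ℌ n (𝔏 n a * 𝔏 n (ℌ n 1)))
        Filter.atTop (nhds a) := by
      refine tendsto_const_nhds.congr' ?_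
      filter_upwards [Filter.eventually_ge_atTop 1] with n hn
      rw [h𝔏ℌ n hn, mul_one, hℌ𝔏 n hn]
    exact tendsto_nhds_unique h1 h2
  · intro a
    have h1 : Filter.Tendsto (fun n => ℌ n (𝔏 n a * 𝔏 n (ℌ n ((𝔏 n a)⁻¹))))
        Filter.atTop (nhds (μ a (ι a))) :=
      hsync a (ι a) (fun _ => a) (fun n => ℌ n ((𝔏 n a)⁻¹)) tendsto_const_nhds (hι a)
    have h2 : Filter.Tendsto (fun n => ℌ n (𝔏 n a * 𝔏 n (ℌ n ((𝔏 n a)⁻¹))))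
        Filter.atTop (nhds einf) := by
      refine heinf.congr' ?_
      filter_upwards [Filter.eventually_ge_atTop 1] with n hn
      rw [h𝔏ℌ n hn, mul_inv_cancel]
    exact tendsto_nhds_unique h1 h2
end

section
/- Let G be a group, H a Hausdorff topological group, Γ : G → Aut(H) a group homomorphism (an action of G on H by automorphisms, written g ↦ Γ_g), and 𝔏ₙ, ℌₙ : H → H (n ≥ 1) maps with 𝔏ₙ ∘ ℌₙ = id_H for all n. Let 𝔅 : H → G be a map and * : H × H → H an operation such that: (i) (synchronization) for all a, b ∈ H and all sequences aₙ → a, bₙ → b in H, ℌₙ(𝔏ₙ(aₙ) · Γ_{𝔅(a)}(𝔏ₙ(bₙ))) → a * b; (ii) (Rota–Baxter identity with limit-weight) 𝔅(a) · 𝔅(b) = 𝔅(a * b) for all a, b ∈ H. Then the operation * is associative: (a * b) * c = a * (b * c) for all a, b, c ∈ H. -/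
/-- Let `Γ : G → Aut(H)` be an action of a group `G` on a Hausdorff
topological group `H` by automorphisms, `(𝔏ₙ, ℌₙ)` one-sided-inverse pairs on `H`,
`𝔅 : H → G` and `*` a binary operation on `H` satisfying the synchronization and
the limit-weighted Rota-Baxter identity. Then `*` is associative. -/
theorem relRB_descent_assoc {G H : Type*} [Group G] [Group H] [TopologicalSpace H]
    [IsTopologicalGroup H] [T2Space H]
    (Γ : G →* MulAut H)
    (𝔏 ℌ : ℕ → H → H) (h𝔏ℌ : ∀ n, n ≥ 1 → ∀ h : H, 𝔏 n (ℌ n h) = h)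
    (𝔅 : H → G) (star : H → H → H)
    (hsync : ∀ (a b : H) (aseq bseq : ℕ → H),
      Filter.Tendsto aseq Filter.atTop (nhds a) →
      Filter.Tendsto bseq Filter.atTop (nhds b) →
      Filter.Tendsto (fun n => ℌ n (𝔏 n (aseq n) * Γ (𝔅 a) (𝔏 n (bseq n))))
        Filter.atTop (nhds (star a b)))
    (hRB : ∀ a b : H, 𝔅 a * 𝔅 b = 𝔅 (star a b)) :
    ∀ a b c : H, star (star a b) c = star a (star b c) := by
  intro a b c
  -- approximating sequences
  set ab : ℕ → H := fun n => ℌ n (𝔏 n a * Γ (𝔅 a) (𝔏 n b)) with hab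
  set bc : ℕ → H := fun n => ℌ n (𝔏 n b * Γ (𝔅 b) (𝔏 n c)) with hbc
  have hab_t : Filter.Tendsto ab Filter.atTop (nhds (star a b)) :=
    hsync a b (fun _ => a) (fun _ => b) tendsto_const_nhds tendsto_const_nhds
  have hbc_t : Filter.Tendsto bc Filter.atTop (nhds (star b c)) :=
    hsync b c (fun _ => b) (fun _ => c) tendsto_const_nhds tendsto_const_nhds
  -- the common sequence
  set f : ℕ → H := fun n =>
    ℌ n (𝔏 n a * Γ (𝔅 a) (𝔏 n b) * Γ (𝔅 (star a b)) (𝔏 n c)) with hf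
  have h1 : Filter.Tendsto f Filter.atTop (nhds (star (star a b) c)) := by
    have := hsync (star a b) c ab (fun _ => c) hab_t tendsto_const_nhds
    refine this.congr' ?_
    filter_upwards [Filter.eventually_ge_atTop 1] with n hn
    simp [f, ab, h𝔏ℌ n hn]
  have h2 : Filter.Tendsto f Filter.atTop (nhds (star a (star b c))) := by
    have := hsync a (star b c) (fun _ => a) bc tendsto_const_nhds hbc_t
    refine this.congr' ?_
    filter_upwards [Filter.eventually_ge_atTop 1] with n hn
    simp only [bc, h𝔏ℌ n hn, f]
    congr 1
    rw [map_mul, mul_assoc, ← hRB a b]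
    simp [mul_comm]
  exact tendsto_nhds_unique h1 h2
end

section
/- Let G be a group, H a Hausdorff topological group, Γ : G → Aut(H) a group homomorphism, and 𝔏ₙ, ℌₙ : H → H (n ≥ 1) bijective maps with ℌₙ = 𝔏ₙ⁻¹ for all n. Let 𝔅 : H → G and * : H × H → H satisfy: (i) for all a, b ∈ H and all sequences aₙ → a, bₙ → b in H, ℌₙ(𝔏ₙ(aₙ) · Γ_{𝔅(a)}(𝔏ₙ(bₙ))) → a * b; (ii) 𝔅(a) · 𝔅(b) = 𝔅(a * b) for all a, b ∈ H. Assume the limits e∞ := limₙ ℌₙ(e_H) and, for each a ∈ H, ι(a) := limₙ ℌₙ(Γ_{𝔅(a)⁻¹}(𝔏ₙ(a)⁻¹)) exist. Then 𝔅(e∞) = e_G, a * e∞ = a for all a ∈ H, and a * ι(a) = e∞ for all a ∈ H; consequently (H, *) is a group with identity e∞ in which the inverse of a is ι(a). -/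
/-- With bijective pairs `(𝔏ₙ, ℌₙ)` on `H`, a limit-weighted relative
Rota-Baxter operator `𝔅 : H → G` for an action `Γ : G → Aut(H)`, and the limits
`e∞ = limₙ ℌₙ(e_H)` and `ι(a) = limₙ ℌₙ(Γ_{𝔅(a)⁻¹}(𝔏ₙ(a)⁻¹))`, one has
`𝔅(e∞) = e_G`, `a * e∞ = a` and `a * ι(a) = e∞`, so `(H, *)` is a group with
identity `e∞` and inverse `ι`. -/
theorem relRB_descent_group {G H : Type*} [Group G] [Group H] [TopologicalSpace H]
    [IsTopologicalGroup H] [T2Space H]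
    (Γ : G →* MulAut H)
    (𝔏 ℌ : ℕ → H → H)
    (hbij : ∀ n, n ≥ 1 → Function.Bijective (𝔏 n))
    (h𝔏ℌ : ∀ n, n ≥ 1 → ∀ h : H, 𝔏 n (ℌ n h) = h)
    (hℌ𝔏 : ∀ n, n ≥ 1 → ∀ h : H, ℌ n (𝔏 n h) = h)
    (𝔅 : H → G) (star : H → H → H)
    (hsync : ∀ (a b : H) (aseq bseq : ℕ → H),
      Filter.Tendsto aseq Filter.atTop (nhds a) →
      Filter.Tendsto bseq Filter.atTop (nhds b) →
      Filter.Tendsto (fun n => ℌ n (𝔏 n (aseq n) * Γ (𝔅 a) (𝔏 n (bseq n))))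
        Filter.atTop (nhds (star a b)))
    (hRB : ∀ a b : H, 𝔅 a * 𝔅 b = 𝔅 (star a b))
    (einf : H)
    (heinf : Filter.Tendsto (fun n => ℌ n (1 : H)) Filter.atTop (nhds einf))
    (ι : H → H)
    (hι : ∀ a : H,
      Filter.Tendsto (fun n => ℌ n (Γ (𝔅 a)⁻¹ ((𝔏 n a)⁻¹)))
        Filter.atTop (nhds (ι a))) :
    𝔅 einf = 1 ∧ (∀ a : H, star a einf = a) ∧ (∀ a : H, star a (ι a) = einf) := by
  have hid : ∀ a : H, star a einf = a := by
    intro a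
    have h1 := hsync a einf (fun _ => a) (fun n => ℌ n 1) tendsto_const_nhds heinf
    have h2 : Filter.Tendsto (fun n => ℌ n (𝔏 n a * Γ (𝔅 a) (𝔏 n (ℌ n 1))))
        Filter.atTop (nhds a) := by
      refine Filter.Tendsto.congr' ?_ (tendsto_const_nhds (x := a))
      filter_upwards [Filter.eventually_ge_atTop 1] with n hn
      rw [h𝔏ℌ n hn, map_one, mul_one, hℌ𝔏 n hn]
    exact tendsto_nhds_unique h1 h2
  have hinv : ∀ a : H, star a (ι a) = einf := by
    intro a
    have h1 := hsync a (ι a) (fun _ => a)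
      (fun n => ℌ n (Γ (𝔅 a)⁻¹ ((𝔏 n a)⁻¹))) tendsto_const_nhds (hι a)
    have h2 : Filter.Tendsto
        (fun n => ℌ n (𝔏 n a * Γ (𝔅 a) (𝔏 n (ℌ n (Γ (𝔅 a)⁻¹ ((𝔏 n a)⁻¹))))))
        Filter.atTop (nhds einf) := by
      refine heinf.congr' ?_
      filter_upwards [Filter.eventually_ge_atTop 1] with n hn
      rw [h𝔏ℌ n hn]
      have : Γ (𝔅 a) (Γ (𝔅 a)⁻¹ ((𝔏 n a)⁻¹)) = (𝔏 n a)⁻¹ := by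
        rw [map_inv Γ, ← MulAut.mul_apply, mul_inv_cancel, MulAut.one_apply]
      rw [this, mul_inv_cancel]
    exact tendsto_nhds_unique h1 h2
  refine ⟨?_, hid, hinv⟩
  have := hRB einf einf
  rw [hid einf] at this
  exact mul_right_cancel (by rw [this, one_mul])
end

section
/- Let (G, ·) be a Hausdorff topological group and 𝔏ₙ, ℌₙ : G → G (n ≥ 1) bijective maps with ℌₙ = 𝔏ₙ⁻¹ for all n. Suppose μ : G × G → G is a synchronized transported multiplication (for all sequences aₙ → a, bₙ → b one has ℌₙ(𝔏ₙ(aₙ) · 𝔏ₙ(bₙ)) → μ(a, b)), and suppose Ψ : G × G → G, written (a, b) ↦ Ψ_a(b), satisfies: for all a, b ∈ G and every sequence bₙ → b in G, ℌₙ(a · 𝔏ₙ(bₙ) · a⁻¹) → Ψ_a(b). Let 𝔅 : G → G satisfy the Rota–Baxter identity with limit-weight: for all a, b ∈ G the limit limₙ ℌₙ(𝔏ₙ(a) · 𝔅(a) · 𝔏ₙ(b) · 𝔅(a)⁻¹) exists and 𝔅(a) · 𝔅(b) = 𝔅(limₙ ℌₙ(𝔏ₙ(a) · 𝔅(a) ·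 𝔏ₙ(b) · 𝔅(a)⁻¹)). Then: (1) Ψ_a(μ(b, c)) = μ(Ψ_a(b), Ψ_a(c)) for all a, b, c ∈ G; (2) Ψ_a(Ψ_b(c)) = Ψ_{a·b}(c) for all a, b, c ∈ G, and Ψ_e = id_G; (3) 𝔅(a) · 𝔅(b) = 𝔅(μ(a, Ψ_{𝔅(a)}(b))) for all a, b ∈ G. In other words, Ψ is an action of (G, ·) on (G, μ) by endomorphisms and 𝔅 is a relative Rota–Baxter operator on (G, ·) for this action. -/
/-- From a limit-weighted Rota-Baxter operator `𝔅` on `(G, ·)` one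
obtains an action `Ψ` of `(G, ·)` on the transported group `(G, μ)` by
endomorphisms, and `𝔅` is a relative Rota-Baxter operator for this action. -/
theorem limitweight_RB_to_relative {G : Type*} [Group G] [TopologicalSpace G]
    [IsTopologicalGroup G] [T2Space G]
    (𝔏 ℌ : ℕ → G → G)
    (hbij : ∀ n, n ≥ 1 → Function.Bijective (𝔏 n))
    (h𝔏ℌ : ∀ n, n ≥ 1 → ∀ g : G, 𝔏 n (ℌ n g) = g)
    (hℌ𝔏 : ∀ n, n ≥ 1 → ∀ g : G, ℌ n (𝔏 n g) = g)
    (μ : G → G → G)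
    (hsync : ∀ (a b : G) (aseq bseq : ℕ → G),
      Filter.Tendsto aseq Filter.atTop (nhds a) →
      Filter.Tendsto bseq Filter.atTop (nhds b) →
      Filter.Tendsto (fun n => ℌ n (𝔏 n (aseq n) * 𝔏 n (bseq n)))
        Filter.atTop (nhds (μ a b)))
    (Ψ : G → G → G)
    (hΨ : ∀ (a b : G) (bseq : ℕ → G),
      Filter.Tendsto bseq Filter.atTop (nhds b) →
      Filter.Tendsto (fun n => ℌ n (a * 𝔏 n (bseq n) * a⁻¹))
        Filter.atTop (nhds (Ψ a b)))
    (𝔅 : G → G)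
    (hRB : ∀ a b : G, ∃ c : G,
      Filter.Tendsto (fun n => ℌ n (𝔏 n a * 𝔅 a * 𝔏 n b * (𝔅 a)⁻¹))
        Filter.atTop (nhds c) ∧ 𝔅 a * 𝔅 b = 𝔅 c) :
    (∀ a b c : G, Ψ a (μ b c) = μ (Ψ a b) (Ψ a c)) ∧
    (∀ a b c : G, Ψ a (Ψ b c) = Ψ (a * b) c) ∧
    (∀ b : G, Ψ 1 b = b) ∧
    (∀ a b : G, 𝔅 a * 𝔅 b = 𝔅 (μ a (Ψ (𝔅 a) b))) := by

  have key : ∀ a b : G, Filter.Tendsto (fun n => ℌ n (a * 𝔏 n b * a⁻¹))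
      Filter.atTop (nhds (Ψ a b)) :=
    fun a b => hΨ a b (fun _ => b) tendsto_const_nhds
  refine ⟨?_, ?_, ?_, ?_⟩
  · intro a b c
    have hbc := hsync b c (fun _ => b) (fun _ => c) tendsto_const_nhds tendsto_const_nhds
    have h1 := hΨ a (μ b c) _ hbc
    have h2 := hsync (Ψ a b) (Ψ a c) _ _ (key a b) (key a c)
    refine tendsto_nhds_unique h1 (h2.congr' ?_)
    filter_upwards [Filter.eventually_ge_atTop 1] with n hn
    rw [h𝔏ℌ n hn, h𝔏ℌ n hn, h𝔏ℌ n hn]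
    congr 1
    group
  · intro a b c
    have hbc := key b c
    have h1 := hΨ a (Ψ b c) _ hbc
    have h2 := key (a * b) c
    refine tendsto_nhds_unique h1 (h2.congr' ?_)
    filter_upwards [Filter.eventually_ge_atTop 1] with n hn
    rw [h𝔏ℌ n hn]
    congr 1
    group
  · intro b
    have h1 := key 1 b
    have h2 : Filter.Tendsto (fun _ : ℕ => b) Filter.atTop (nhds b) := tendsto_const_nhds
    refine tendsto_nhds_unique h1 (h2.congr' ?_)
    filter_upwards [Filter.eventually_ge_atTop 1] with n hn
    rw [one_mul, inv_one, mul_one, hℌ𝔏 n hn]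
  · intro a b
    obtain ⟨c, hc, hBc⟩ := hRB a b
    have h2 := hsync a (Ψ (𝔅 a) b) (fun _ => a) _ tendsto_const_nhds (key (𝔅 a) b)
    have : c = μ a (Ψ (𝔅 a) b) := by
      refine tendsto_nhds_unique hc (h2.congr' ?_)
      filter_upwards [Filter.eventually_ge_atTop 1] with n hn
      rw [h𝔏ℌ n hn]
      congr 1
      group
    rw [hBc, this]
end

section
/- Let 𝔤 be a real Lie algebra carrying a Hausdorff topology for which 𝔤 is a topological additive group. Let 𝔏ₙ, ℌₙ : 𝔤 → 𝔤 (n ≥ 1) be linear maps with 𝔏ₙ ∘ ℌₙ = id, let γ : 𝔤 → End(𝔤) be linear with each γ_u a derivation of the bracket (γ_u[v, w] = [γ_u v, w] + [v, γ_u w]) and γ_{[u,v]} = γ_u ∘ γ_v − γ_v ∘ γ_u, and let B : 𝔤 → 𝔤 be linear. Assume: (a) there is β : 𝔤 × 𝔤 → 𝔤 such that for all sequences uₙ → u, vₙ → v one has ℌₙ([𝔏ₙ uₙ, 𝔏ₙ vₙ]) → β(u, v); (b) there is α : 𝔤 × 𝔤 → 𝔤 such that for all u, v and every sequence vₙ →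 v one has ℌₙ(γ_u(𝔏ₙ vₙ)) → α(u, v), and for every sequence uₙ → u one has ℌₙ(γ_{B(uₙ)}(𝔏ₙ v)) → α(B(u), v); (c) [B(u), B(v)] = B(α(B(u), v) − α(B(v), u) + β(u, v)) for all u, v. Define u ▷ v := α(B(u), v). Then for all u, v, w ∈ 𝔤: u ▷ β(v, w) = β(u ▷ v, w) + β(v, u ▷ w), and (β(u, v) + u ▷ v − v ▷ u) ▷ w = u ▷ (v ▷ w) − v ▷ (u ▷ w); that is, (𝔤, [·,·], ▷) is a post-Lie algebra with limit-weight. -/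
/-- A relative Rota-Baxter operator `B` with limit-weight
`limₙ (𝔏ₙ, ℌₙ)` on a topological Lie algebra `𝔤` for an action `γ` induces, via
`u ▷ v := α(B u, v)` (where `α` is the synchronized limit of `ℌₙ ∘ γ ∘ 𝔏ₙ` and
`β` that of `ℌₙ[𝔏ₙ·, 𝔏ₙ·]`), a post-Lie algebra with limit-weight. -/
theorem relRB_gives_limit_postLie {𝔤 : Type*} [LieRing 𝔤] [LieAlgebra ℝ 𝔤]
    [TopologicalSpace 𝔤] [IsTopologicalAddGroup 𝔤] [T2Space 𝔤]
    (𝔏 ℌ : ℕ → 𝔤 →ₗ[ℝ] 𝔤)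
    (h𝔏ℌ : ∀ n, n ≥ 1 → ∀ x : 𝔤, 𝔏 n (ℌ n x) = x)
    (γ : 𝔤 →ₗ[ℝ] 𝔤 →ₗ[ℝ] 𝔤)
    (hder : ∀ u v w : 𝔤, γ u ⁅v, w⁆ = ⁅γ u v, w⁆ + ⁅v, γ u w⁆)
    (hact : ∀ u v w : 𝔤, γ ⁅u, v⁆ w = γ u (γ v w) - γ v (γ u w))
    (B : 𝔤 →ₗ[ℝ] 𝔤)
    (β : 𝔤 → 𝔤 → 𝔤)
    (hβ : ∀ (u v : 𝔤) (useq vseq : ℕ → 𝔤),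
      Filter.Tendsto useq Filter.atTop (nhds u) →
      Filter.Tendsto vseq Filter.atTop (nhds v) →
      Filter.Tendsto (fun n => ℌ n ⁅𝔏 n (useq n), 𝔏 n (vseq n)⁆)
        Filter.atTop (nhds (β u v)))
    (α : 𝔤 → 𝔤 → 𝔤)
    (hα : ∀ (u v : 𝔤) (vseq : ℕ → 𝔤),
      Filter.Tendsto vseq Filter.atTop (nhds v) →
      Filter.Tendsto (fun n => ℌ n (γ u (𝔏 n (vseq n))))
        Filter.atTop (nhds (α u v)))
    (hαB : ∀ (u v : 𝔤) (useq : ℕ → 𝔤),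
      Filter.Tendsto useq Filter.atTop (nhds u) →
      Filter.Tendsto (fun n => ℌ n (γ (B (useq n)) (𝔏 n v)))
        Filter.atTop (nhds (α (B u) v)))
    (hRB : ∀ u v : 𝔤, ⁅B u, B v⁆ = B (α (B u) v - α (B v) u + β u v)) :
    (∀ u v w : 𝔤,
      α (B u) (β v w) = β (α (B u) v) w + β v (α (B u) w)) ∧
    (∀ u v w : 𝔤,
      α (B (β u v + α (B u) v - α (B v) u)) w
        = α (B u) (α (B v) w) - α (B v) (α (B u) w)) := by
  constructor
  · intro u v w
    have hx : Filter.Tendsto (fun n => ℌ n ⁅𝔏 n v, 𝔏 n w⁆) Filter.atTop (nhds (β v w)) :=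
      hβ v w (fun _ => v) (fun _ => w) tendsto_const_nhds tendsto_const_nhds
    have h1 : Filter.Tendsto (fun n => ℌ n (γ (B u) (𝔏 n (ℌ n ⁅𝔏 n v, 𝔏 n w⁆))))
        Filter.atTop (nhds (α (B u) (β v w))) := hα (B u) (β v w) _ hx
    have ha : Filter.Tendsto (fun n => ℌ n (γ (B u) (𝔏 n v))) Filter.atTop
        (nhds (α (B u) v)) := hα (B u) v (fun _ => v) tendsto_const_nhds
    have hb : Filter.Tendsto (fun n => ℌ n (γ (B u) (𝔏 n w))) Filter.atTop
        (nhds (α (B u) w)) := hα (B u) w (fun _ => w) tendsto_const_nhds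
    have h2 : Filter.Tendsto (fun n => ℌ n ⁅𝔏 n (ℌ n (γ (B u) (𝔏 n v))), 𝔏 n w⁆)
        Filter.atTop (nhds (β (α (B u) v) w)) :=
      hβ _ w _ (fun _ => w) ha tendsto_const_nhds
    have h3 : Filter.Tendsto (fun n => ℌ n ⁅𝔏 n v, 𝔏 n (ℌ n (γ (B u) (𝔏 n w)))⁆)
        Filter.atTop (nhds (β v (α (B u) w))) :=
      hβ v _ (fun _ => v) _ tendsto_const_nhds hb
    have heq : ∀ᶠ n in Filter.atTop,
        (fun n => ℌ n ⁅𝔏 n (ℌ n (γ (B u) (𝔏 n v))), 𝔏 n w⁆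
          + ℌ n ⁅𝔏 n v, 𝔏 n (ℌ n (γ (B u) (𝔏 n w)))⁆) n
        = ℌ n (γ (B u) (𝔏 n (ℌ n ⁅𝔏 n v, 𝔏 n w⁆))) := by
      filter_upwards [Filter.eventually_ge_atTop 1] with n hn
      simp only [h𝔏ℌ n hn, ← map_add, hder]
    exact tendsto_nhds_unique h1 (((h2.add h3).congr' heq))
  · intro u v w
    have key : B (β u v + α (B u) v - α (B v) u) = ⁅B u, B v⁆ := by
      rw [hRB u v]; congr 1; abel
    have h1 : Filter.Tendsto (fun n => ℌ n (γ ⁅B u, B v⁆ (𝔏 n w))) Filter.atTop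
        (nhds (α (B (β u v + α (B u) v - α (B v) u)) w)) := by
      rw [key] at *
      exact hα ⁅B u, B v⁆ w (fun _ => w) tendsto_const_nhds
    have hc : Filter.Tendsto (fun n => ℌ n (γ (B v) (𝔏 n w))) Filter.atTop
        (nhds (α (B v) w)) := hα (B v) w (fun _ => w) tendsto_const_nhds
    have hd : Filter.Tendsto (fun n => ℌ n (γ (B u) (𝔏 n w))) Filter.atTop
        (nhds (α (B u) w)) := hα (B u) w (fun _ => w) tendsto_const_nhds
    have h2 : Filter.Tendsto (fun n => ℌ n (γ (B u) (𝔏 n (ℌ n (γ (B v) (𝔏 n w))))))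
        Filter.atTop (nhds (α (B u) (α (B v) w))) := hα (B u) _ _ hc
    have h3 : Filter.Tendsto (fun n => ℌ n (γ (B v) (𝔏 n (ℌ n (γ (B u) (𝔏 n w))))))
        Filter.atTop (nhds (α (B v) (α (B u) w))) := hα (B v) _ _ hd
    have heq : ∀ᶠ n in Filter.atTop,
        (fun n => ℌ n (γ (B u) (𝔏 n (ℌ n (γ (B v) (𝔏 n w)))))
          - ℌ n (γ (B v) (𝔏 n (ℌ n (γ (B u) (𝔏 n w)))))) n
        = ℌ n (γ ⁅B u, B v⁆ (𝔏 n w)) := by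
      filter_upwards [Filter.eventually_ge_atTop 1] with n hn
      simp only [h𝔏ℌ n hn, ← map_sub, hact]
    exact tendsto_nhds_unique h1 (((h2.sub h3).congr' heq))
end

section
/- Let 𝔤 be a real Lie algebra carrying a Hausdorff topology for which 𝔤 is a topological additive group. Let 𝔏ₙ, ℌₙ : 𝔤 → 𝔤 (n ≥ 1) be linear maps with 𝔏ₙ ∘ ℌₙ = id, let γ : 𝔤 → End(𝔤) be linear with each γ_u a derivation of the bracket and γ_{[u,v]} = γ_u ∘ γ_v − γ_v ∘ γ_u, and let B : 𝔤 → 𝔤 be linear. Assume: (a) (limit-abelianness) for all sequences uₙ → u, vₙ → v one has ℌₙ([𝔏ₙ uₙ, 𝔏ₙ vₙ]) → 0; (b) there is α : 𝔤 × 𝔤 → 𝔤 such that for all u, v and every sequence vₙ → v one has ℌₙ(γ_u(𝔏ₙ vₙ)) → α(u, v), and for every sequence uₙ → u one has ℌₙ(γ_{B(uₙ)}(𝔏ₙ v)) → α(B(u), v); (c) [B(u), B(v)] = B(α(B(u), v) − α(B(v), u)) for all u, v. Then the operation u ▷ v := α(B(u), v) is left pre-Lie: u ▷ (v ▷ w)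 − (u ▷ v) ▷ w = v ▷ (u ▷ w) − (v ▷ u) ▷ w for all u, v, w ∈ 𝔤. -/
/-- If in addition the topological Lie algebra `𝔤` is limit-abelian
(`ℌₙ[𝔏ₙ uₙ, 𝔏ₙ vₙ] → 0`), then the operation `u ▷ v := α(B u, v)` induced by a
limit-weighted relative Rota-Baxter operator `B` is left pre-Lie. -/
theorem relRB_limit_abelian_gives_preLie {𝔤 : Type*} [LieRing 𝔤] [LieAlgebra ℝ 𝔤]
    [TopologicalSpace 𝔤] [IsTopologicalAddGroup 𝔤] [T2Space 𝔤]
    (𝔏 ℌ : ℕ → 𝔤 →ₗ[ℝ] 𝔤)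
    (h𝔏ℌ : ∀ n, n ≥ 1 → ∀ x : 𝔤, 𝔏 n (ℌ n x) = x)
    (γ : 𝔤 →ₗ[ℝ] 𝔤 →ₗ[ℝ] 𝔤)
    (hder : ∀ u v w : 𝔤, γ u ⁅v, w⁆ = ⁅γ u v, w⁆ + ⁅v, γ u w⁆)
    (hact : ∀ u v w : 𝔤, γ ⁅u, v⁆ w = γ u (γ v w) - γ v (γ u w))
    (B : 𝔤 →ₗ[ℝ] 𝔤)
    (habelian : ∀ (u v : 𝔤) (useq vseq : ℕ → 𝔤),
      Filter.Tendsto useq Filter.atTop (nhds u) →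
      Filter.Tendsto vseq Filter.atTop (nhds v) →
      Filter.Tendsto (fun n => ℌ n ⁅𝔏 n (useq n), 𝔏 n (vseq n)⁆)
        Filter.atTop (nhds (0 : 𝔤)))
    (α : 𝔤 → 𝔤 → 𝔤)
    (hα : ∀ (u v : 𝔤) (vseq : ℕ → 𝔤),
      Filter.Tendsto vseq Filter.atTop (nhds v) →
      Filter.Tendsto (fun n => ℌ n (γ u (𝔏 n (vseq n))))
        Filter.atTop (nhds (α u v)))
    (hαB : ∀ (u v : 𝔤) (useq : ℕ → 𝔤),
      Filter.Tendsto useq Filter.atTop (nhds u) →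
      Filter.Tendsto (fun n => ℌ n (γ (B (useq n)) (𝔏 n v)))
        Filter.atTop (nhds (α (B u) v)))
    (hRB : ∀ u v : 𝔤, ⁅B u, B v⁆ = B (α (B u) v - α (B v) u)) :
    ∀ u v w : 𝔤,
      α (B u) (α (B v) w) - α (B (α (B u) v)) w
        = α (B v) (α (B u) w) - α (B (α (B v) u)) w := by

  intro u v w
  have ha : Filter.Tendsto (fun n => ℌ n (γ (B u) (𝔏 n v))) Filter.atTop
      (nhds (α (B u) v)) := hα (B u) v (fun _ => v) tendsto_const_nhds
  have hb : Filter.Tendsto (fun n => ℌ n (γ (B v) (𝔏 n u))) Filter.atTop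
      (nhds (α (B v) u)) := hα (B v) u (fun _ => u) tendsto_const_nhds
  have hc : Filter.Tendsto (fun n => ℌ n (γ (B v) (𝔏 n w))) Filter.atTop
      (nhds (α (B v) w)) := hα (B v) w (fun _ => w) tendsto_const_nhds
  have hd : Filter.Tendsto (fun n => ℌ n (γ (B u) (𝔏 n w))) Filter.atTop
      (nhds (α (B u) w)) := hα (B u) w (fun _ => w) tendsto_const_nhds
  have hf : Filter.Tendsto (fun n =>
      ℌ n (γ (B u) (𝔏 n (ℌ n (γ (B v) (𝔏 n w)))))
        - ℌ n (γ (B (ℌ n (γ (B u) (𝔏 n v)))) (𝔏 n w))) Filter.atTop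
      (nhds (α (B u) (α (B v) w) - α (B (α (B u) v)) w)) :=
    (hα (B u) (α (B v) w) _ hc).sub (hαB (α (B u) v) w _ ha)
  have hg : Filter.Tendsto (fun n =>
      ℌ n (γ (B v) (𝔏 n (ℌ n (γ (B u) (𝔏 n w)))))
        - ℌ n (γ (B (ℌ n (γ (B v) (𝔏 n u)))) (𝔏 n w))) Filter.atTop
      (nhds (α (B v) (α (B u) w) - α (B (α (B v) u)) w)) :=
    (hα (B v) (α (B u) w) _ hd).sub (hαB (α (B v) u) w _ hb)
  have hze : α (0 : 𝔤) w = 0 := by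
    have h1 := hα 0 w (fun _ => w) tendsto_const_nhds
    simp only [map_zero, LinearMap.zero_apply] at h1
    have h2 : Filter.Tendsto (fun _ : ℕ => (0 : 𝔤)) Filter.atTop (nhds 0) :=
      tendsto_const_nhds
    exact tendsto_nhds_unique h1 h2
  have ht1 : Filter.Tendsto (fun n =>
      ℌ n (γ (B (α (B u) v - ℌ n (γ (B u) (𝔏 n v)))) (𝔏 n w)))
      Filter.atTop (nhds 0) := by
    have hs : Filter.Tendsto (fun n => α (B u) v - ℌ n (γ (B u) (𝔏 n v)))
        Filter.atTop (nhds 0) := by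
      have := (tendsto_const_nhds (x := α (B u) v)).sub ha
      simpa using this
    simpa [hze] using hαB 0 w _ hs
  have ht2 : Filter.Tendsto (fun n =>
      ℌ n (γ (B (α (B v) u - ℌ n (γ (B v) (𝔏 n u)))) (𝔏 n w)))
      Filter.atTop (nhds 0) := by
    have hs : Filter.Tendsto (fun n => α (B v) u - ℌ n (γ (B v) (𝔏 n u)))
        Filter.atTop (nhds 0) := by
      have := (tendsto_const_nhds (x := α (B v) u)).sub hb
      simpa using this
    simpa [hze] using hαB 0 w _ hs
  have hev : ∀ᶠ n in Filter.atTop,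
      (ℌ n (γ (B u) (𝔏 n (ℌ n (γ (B v) (𝔏 n w)))))
          - ℌ n (γ (B (ℌ n (γ (B u) (𝔏 n v)))) (𝔏 n w)))
        - (ℌ n (γ (B v) (𝔏 n (ℌ n (γ (B u) (𝔏 n w)))))
          - ℌ n (γ (B (ℌ n (γ (B v) (𝔏 n u)))) (𝔏 n w)))
      = ℌ n (γ (B (α (B u) v - ℌ n (γ (B u) (𝔏 n v)))) (𝔏 n w))
        - ℌ n (γ (B (α (B v) u - ℌ n (γ (B v) (𝔏 n u)))) (𝔏 n w)) := by
    filter_upwards [Filter.eventually_ge_atTop 1] with n hn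
    have hL := h𝔏ℌ n hn
    rw [hL, hL]
    simp only [← map_sub]
    congr 1
    have key : γ (B u) (γ (B v) (𝔏 n w)) - γ (B v) (γ (B u) (𝔏 n w))
        = γ (B (α (B u) v)) (𝔏 n w) - γ (B (α (B v) u)) (𝔏 n w) := by
      rw [← hact, hRB, map_sub, map_sub, LinearMap.sub_apply]
    simp only [map_sub, LinearMap.sub_apply]
    conv_lhs => rw [sub_sub_sub_comm]
    conv_rhs => rw [sub_sub_sub_comm]
    rw [key]
  have hfg0 : Filter.Tendsto (fun n =>
      (ℌ n (γ (B u) (𝔏 n (ℌ n (γ (B v) (𝔏 n w)))))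
          - ℌ n (γ (B (ℌ n (γ (B u) (𝔏 n v)))) (𝔏 n w)))
        - (ℌ n (γ (B v) (𝔏 n (ℌ n (γ (B u) (𝔏 n w)))))
          - ℌ n (γ (B (ℌ n (γ (B v) (𝔏 n u)))) (𝔏 n w))))
      Filter.atTop (nhds 0) := by
    have := (ht1.sub ht2).congr' (hev.mono fun n h => h.symm)
    simpa using this
  have := tendsto_nhds_unique (hf.sub hg) hfg0
  exact sub_eq_zero.mp this
end

section
/- Let G be a Hausdorff topological group and 𝔏ₙ, ℌₙ : G → G (n ≥ 1) bijective maps with ℌₙ = 𝔏ₙ⁻¹ for all n. Assume: (a) μ : G × G → G is a synchronized transported multiplication (for all sequences aₙ → a, bₙ → b one has ℌₙ(𝔏ₙ(aₙ) · 𝔏ₙ(bₙ)) → μ(a, b)); (b) (completeness) the limits e∞ := limₙ ℌₙ(e) and ι(a) := limₙ ℌₙ(𝔏ₙ(a)⁻¹) exist for every a ∈ G; (c) (binary adjoint synchronization) there is δ : G × G → G such that for all sequences aₙ → a, bₙ → b one has ℌₙ(aₙ · 𝔏ₙ(bₙ) · aₙ⁻¹) → δ(a, b); (d) limₙ 𝔏ₙ(a)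 = e for every a ∈ G. Then μ is commutative: μ(a, b) = μ(b, a) for all a, b ∈ G. -/
/-- A complete binary-adjoint-synchronized
`limₙ (𝔏ₙ, ℌₙ)`-group with `limₙ 𝔏ₙ(a) = e` has a commutative transported
multiplication, i.e. it is limit-abelian. -/
theorem limitweight_zero_is_limit_abelian {G : Type*} [Group G] [TopologicalSpace G]
    [IsTopologicalGroup G] [T2Space G]
    (𝔏 ℌ : ℕ → G → G)
    (hbij : ∀ n, n ≥ 1 → Function.Bijective (𝔏 n))
    (h𝔏ℌ : ∀ n, n ≥ 1 → ∀ g : G, 𝔏 n (ℌ n g) = g)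
    (hℌ𝔏 : ∀ n, n ≥ 1 → ∀ g : G, ℌ n (𝔏 n g) = g)
    (μ : G → G → G)
    (hsync : ∀ (a b : G) (aseq bseq : ℕ → G),
      Filter.Tendsto aseq Filter.atTop (nhds a) →
      Filter.Tendsto bseq Filter.atTop (nhds b) →
      Filter.Tendsto (fun n => ℌ n (𝔏 n (aseq n) * 𝔏 n (bseq n)))
        Filter.atTop (nhds (μ a b)))
    (einf : G)
    (heinf : Filter.Tendsto (fun n => ℌ n (1 : G)) Filter.atTop (nhds einf))
    (ι : G → G)
    (hι : ∀ a : G,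
      Filter.Tendsto (fun n => ℌ n ((𝔏 n a)⁻¹)) Filter.atTop (nhds (ι a)))
    (δ : G → G → G)
    (hδ : ∀ (a b : G) (aseq bseq : ℕ → G),
      Filter.Tendsto aseq Filter.atTop (nhds a) →
      Filter.Tendsto bseq Filter.atTop (nhds b) →
      Filter.Tendsto (fun n => ℌ n (aseq n * 𝔏 n (bseq n) * (aseq n)⁻¹))
        Filter.atTop (nhds (δ a b)))
    (h𝔏lim : ∀ a : G, Filter.Tendsto (fun n => 𝔏 n a) Filter.atTop (nhds (1 : G))) :
    ∀ a b : G, μ a b = μ b a := by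
  intro a b
  -- δ 1 b = b
  have hδ1b : δ 1 b = b := by
    have h1 : Filter.Tendsto (fun n => ℌ n ((1:G) * 𝔏 n b * (1:G)⁻¹))
        Filter.atTop (nhds (δ 1 b)) :=
      hδ 1 b (fun _ => 1) (fun _ => b) tendsto_const_nhds tendsto_const_nhds
    have h2 : Filter.Tendsto (fun n => ℌ n ((1:G) * 𝔏 n b * (1:G)⁻¹))
        Filter.atTop (nhds b) := by
      have : ∀ᶠ n in Filter.atTop, ℌ n ((1:G) * 𝔏 n b * (1:G)⁻¹) = b := by
        filter_upwards [Filter.eventually_ge_atTop 1] with n hn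
        simp [hℌ𝔏 n hn]
      exact Filter.Tendsto.congr' (this.mono fun n h => h.symm) tendsto_const_nhds
    exact tendsto_nhds_unique h1 h2
  -- the conjugated sequence tends to b
  set c : ℕ → G := fun n => ℌ n (𝔏 n a * 𝔏 n b * (𝔏 n a)⁻¹) with hc
  have hcb : Filter.Tendsto c Filter.atTop (nhds b) := by
    have := hδ 1 b (fun n => 𝔏 n a) (fun _ => b) (h𝔏lim a) tendsto_const_nhds
    rwa [hδ1b] at this
  -- apply hsync with aseq = c, bseq = const a
  have h3 : Filter.Tendsto (fun n => ℌ n (𝔏 n (c n) * 𝔏 n a))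
      Filter.atTop (nhds (μ b a)) :=
    hsync b a c (fun _ => a) hcb tendsto_const_nhds
  have h4 : Filter.Tendsto (fun n => ℌ n (𝔏 n (c n) * 𝔏 n a))
      Filter.atTop (nhds (μ a b)) := by
    have heq : ∀ᶠ n in Filter.atTop,
        ℌ n (𝔏 n a * 𝔏 n b) = ℌ n (𝔏 n (c n) * 𝔏 n a) := by
      filter_upwards [Filter.eventually_ge_atTop 1] with n hn
      simp [hc, h𝔏ℌ n hn, mul_assoc]
    exact Filter.Tendsto.congr' heq
      (hsync a b (fun _ => a) (fun _ => b) tendsto_const_nhds tendsto_const_nhds)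
  exact tendsto_nhds_unique h4 h3
end

section
/- Let (G, ·) be a Hausdorff topological group, Γ : G → Aut(G) a group homomorphism (g ↦ Γ_g), and 𝔏ₙ, ℌₙ : G → G (n ≥ 1) maps with 𝔏ₙ ∘ ℌₙ = id_G. Assume: (a) μ : G × G → G is a synchronized transported multiplication (for all sequences aₙ → a, bₙ → b one has ℌₙ(𝔏ₙ(aₙ) · 𝔏ₙ(bₙ)) → μ(a, b)); (b) there is ν : G × G → G such that for all a, b ∈ G and every sequence bₙ → b one has ℌₙ(Γ_a(𝔏ₙ(bₙ))) → ν(a, b); (c) 𝔇 : G → G is a relative differential operator with limit-weight, i.e. 𝔇(a · b) = μ(𝔇(a), ν(a, 𝔇(b))) for all a, b ∈ G. Define a ∘ b := ν(a, 𝔇(b)). Then for all a, b, c ∈ G: a ∘ (b · c) = μ(a ∘ b, (a · b) ∘ c), and ν(a, b ∘ c) = (a · b) ∘ c. -/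
/-- A relative differential operator `𝔇` with limit-weight on
`(G, ·)` for an action `Γ` induces, via `a ∘ b := ν(a, 𝔇(b))`, a Novikov group
structure with limit-weight: `a ∘ (b·c) = μ(a ∘ b, (a·b) ∘ c)` and
`ν(a, b ∘ c) = (a·b) ∘ c`. -/
theorem relDiff_gives_Novikov_group {G : Type*} [Group G] [TopologicalSpace G]
    [IsTopologicalGroup G] [T2Space G]
    (Γ : G →* MulAut G)
    (𝔏 ℌ : ℕ → G → G) (h𝔏ℌ : ∀ n, n ≥ 1 → ∀ g : G, 𝔏 n (ℌ n g) = g)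
    (μ : G → G → G)
    (hsync : ∀ (a b : G) (aseq bseq : ℕ → G),
      Filter.Tendsto aseq Filter.atTop (nhds a) →
      Filter.Tendsto bseq Filter.atTop (nhds b) →
      Filter.Tendsto (fun n => ℌ n (𝔏 n (aseq n) * 𝔏 n (bseq n)))
        Filter.atTop (nhds (μ a b)))
    (ν : G → G → G)
    (hν : ∀ (a b : G) (bseq : ℕ → G),
      Filter.Tendsto bseq Filter.atTop (nhds b) →
      Filter.Tendsto (fun n => ℌ n (Γ a (𝔏 n (bseq n))))
        Filter.atTop (nhds (ν a b)))
    (𝔇 : G → G)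
    (hdiff : ∀ a b : G, 𝔇 (a * b) = μ (𝔇 a) (ν a (𝔇 b))) :
    (∀ a b c : G, ν a (𝔇 (b * c)) = μ (ν a (𝔇 b)) (ν (a * b) (𝔇 c))) ∧
    (∀ a b c : G, ν a (ν b (𝔇 c)) = ν (a * b) (𝔇 c)) := by
  -- ν a (ν b x) = ν (a*b) x
  have key2 : ∀ a b x : G, ν a (ν b x) = ν (a * b) x := by
    intro a b x
    have h1 : Filter.Tendsto (fun n => ℌ n (Γ b (𝔏 n x))) Filter.atTop (nhds (ν b x)) :=
      hν b x (fun _ => x) tendsto_const_nhds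
    have h2 := hν a (ν b x) _ h1
    have h4 : Filter.Tendsto (fun n => ℌ n (Γ (a * b) (𝔏 n x))) Filter.atTop
        (nhds (ν (a * b) x)) := hν (a * b) x (fun _ => x) tendsto_const_nhds
    have h3 : Filter.Tendsto (fun n => ℌ n (Γ a (𝔏 n (ℌ n (Γ b (𝔏 n x)))))) Filter.atTop
        (nhds (ν (a * b) x)) := by
      refine h4.congr' ?_
      filter_upwards [Filter.eventually_atTop.2 ⟨1, fun n hn => hn⟩] with n hn
      rw [h𝔏ℌ n hn, map_mul]
      rfl
    exact tendsto_nhds_unique h2 h3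
  -- ν a (μ x y) = μ (ν a x) (ν a y)
  have key1 : ∀ a x y : G, ν a (μ x y) = μ (ν a x) (ν a y) := by
    intro a x y
    have h1 : Filter.Tendsto (fun n => ℌ n (𝔏 n x * 𝔏 n y)) Filter.atTop (nhds (μ x y)) :=
      hsync x y (fun _ => x) (fun _ => y) tendsto_const_nhds tendsto_const_nhds
    have h2 := hν a (μ x y) _ h1
    have hx : Filter.Tendsto (fun n => ℌ n (Γ a (𝔏 n x))) Filter.atTop (nhds (ν a x)) :=
      hν a x (fun _ => x) tendsto_const_nhds
    have hy : Filter.Tendsto (fun n => ℌ n (Γ a (𝔏 n y))) Filter.atTop (nhds (ν a y)) :=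
      hν a y (fun _ => y) tendsto_const_nhds
    have h4 := hsync (ν a x) (ν a y) _ _ hx hy
    have h3 : Filter.Tendsto (fun n => ℌ n (Γ a (𝔏 n (ℌ n (𝔏 n x * 𝔏 n y))))) Filter.atTop
        (nhds (μ (ν a x) (ν a y))) := by
      refine h4.congr' ?_
      filter_upwards [Filter.eventually_atTop.2 ⟨1, fun n hn => hn⟩] with n hn
      rw [h𝔏ℌ n hn, h𝔏ℌ n hn, h𝔏ℌ n hn, map_mul]
    exact tendsto_nhds_unique h2 h3
  refine ⟨fun a b c => ?_, fun a b c => key2 a b (𝔇 c)⟩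
  rw [hdiff, key1, key2]
end

section
/- Let 𝔤 be a real Lie algebra carrying a Hausdorff topology for which 𝔤 is a topological additive group. Let 𝔏ₙ, ℌₙ : 𝔤 → 𝔤 (n ≥ 1) be linear maps with 𝔏ₙ ∘ ℌₙ = id, let γ : 𝔤 → End(𝔤) be linear with each γ_u a derivation of the bracket and γ_{[u,v]} = γ_u ∘ γ_v − γ_v ∘ γ_u, and let D : 𝔤 → 𝔤 be linear. Assume: (a) (limit-abelianness) for all sequences uₙ → u, vₙ → v one has ℌₙ([𝔏ₙ uₙ, 𝔏ₙ vₙ]) → 0; (b) there is α : 𝔤 × 𝔤 → 𝔤 such that for all u, v and every sequence vₙ → v one has ℌₙ(γ_u(𝔏ₙ vₙ)) → α(u, v); (c) D is a relative differential operator with limit-weight, i.e. D([u, v]) = α(u, D(v)) − α(v, D(u)) for all u, v ∈ 𝔤. Define u ∘ v := α(u, D(v)). Then for all u, v, w ∈ 𝔤: u ∘ [v, w] = α(u, v ∘ w) − α(u, w ∘ v), and [u, v] ∘ w = α(u, v ∘ w) − α(v, u ∘ w); that is, (𝔤, ∘) is a Novikov Lie algebra with limit-weight for the action γ. -/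
/-- A relative differential operator `D` with limit-weight on a
limit-abelian topological Lie algebra `𝔤` for an action `γ` induces, via
`u ∘ v := α(u, D v)`, a Novikov Lie algebra with limit-weight for the action. -/
theorem relDiff_gives_limit_Novikov_Lie {𝔤 : Type*} [LieRing 𝔤] [LieAlgebra ℝ 𝔤]
    [TopologicalSpace 𝔤] [IsTopologicalAddGroup 𝔤] [T2Space 𝔤]
    (𝔏 ℌ : ℕ → 𝔤 →ₗ[ℝ] 𝔤)
    (h𝔏ℌ : ∀ n, n ≥ 1 → ∀ x : 𝔤, 𝔏 n (ℌ n x) = x)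
    (γ : 𝔤 →ₗ[ℝ] 𝔤 →ₗ[ℝ] 𝔤)
    (hder : ∀ u v w : 𝔤, γ u ⁅v, w⁆ = ⁅γ u v, w⁆ + ⁅v, γ u w⁆)
    (hact : ∀ u v w : 𝔤, γ ⁅u, v⁆ w = γ u (γ v w) - γ v (γ u w))
    (D : 𝔤 →ₗ[ℝ] 𝔤)
    (habelian : ∀ (u v : 𝔤) (useq vseq : ℕ → 𝔤),
      Filter.Tendsto useq Filter.atTop (nhds u) →
      Filter.Tendsto vseq Filter.atTop (nhds v) →
      Filter.Tendsto (fun n => ℌ n ⁅𝔏 n (useq n), 𝔏 n (vseq n)⁆)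
        Filter.atTop (nhds (0 : 𝔤)))
    (α : 𝔤 → 𝔤 → 𝔤)
    (hα : ∀ (u v : 𝔤) (vseq : ℕ → 𝔤),
      Filter.Tendsto vseq Filter.atTop (nhds v) →
      Filter.Tendsto (fun n => ℌ n (γ u (𝔏 n (vseq n))))
        Filter.atTop (nhds (α u v)))
    (hdiff : ∀ u v : 𝔤, D ⁅u, v⁆ = α u (D v) - α v (D u)) :
    (∀ u v w : 𝔤, α u (D ⁅v, w⁆) = α u (α v (D w)) - α u (α w (D v))) ∧
    (∀ u v w : 𝔤, α ⁅u, v⁆ (D w) = α u (α v (D w)) - α v (α u (D w))) := by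
  have key : ∀ u x : 𝔤, Filter.Tendsto (fun n => ℌ n (γ u (𝔏 n x)))
      Filter.atTop (nhds (α u x)) :=
    fun u x => hα u x (fun _ => x) tendsto_const_nhds
  have hsub : ∀ u x y : 𝔤, α u (x - y) = α u x - α u y := by
    intro u x y
    refine tendsto_nhds_unique (key u (x - y)) ?_
    simpa [map_sub] using (key u x).sub (key u y)
  have hcomp : ∀ u v x : 𝔤, Filter.Tendsto (fun n => ℌ n (γ u (γ v (𝔏 n x))))
      Filter.atTop (nhds (α u (α v x))) := by
    intro u v x
    have h := hα u (α v x) (fun n => ℌ n (γ v (𝔏 n x))) (key v x)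
    refine Filter.Tendsto.congr' ?_ h
    filter_upwards [Filter.eventually_atTop.2 ⟨1, fun n hn => h𝔏ℌ n hn (γ v (𝔏 n x))⟩]
      with n hn
    rw [hn]
  have hbra : ∀ u v x : 𝔤, α ⁅u, v⁆ x = α u (α v x) - α v (α u x) := by
    intro u v x
    refine tendsto_nhds_unique (key ⁅u, v⁆ x) ?_
    have := (hcomp u v x).sub (hcomp v u x)
    refine this.congr fun n => ?_
    simp [hact, map_sub]
  refine ⟨fun u v w => ?_, fun u v w => hbra u v (D w)⟩
  rw [hdiff, hsub]
end
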